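/- If G is a finite connected simple graph that is not a path, then there exists an integer K such that for all k ≥ K the map γ_{L^k(G)} : Aut(L^k(G)) → Aut(L^{k+1}(G)) is a group isomorphism; in particular the sequence of automorphism groups Aut(L^k(G)) eventually stabilizes (all are isomorphic for k ≥ K). -/

import Mathlib

set_option linter.unusedSectionVars false
set_option maxHeartbeats 1000000


open SimpleGraph

universe u

/-- The iterated line graph: `iterLineGraph G k` is `L^k(G)` together with its vertex type,
with `L^0(G) = G`. -/
def iterLineGraph {V : Type u} (G : SimpleGraph V) : ℕ → Σ W : Type u, SimpleGraph W
  | 0 => ⟨V, G⟩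
  | k + 1 => ⟨(iterLineGraph G k).2.edgeSet, (iterLineGraph G k).2.lineGraph⟩

/-- A vertex of `L^{k+1}(G)` is (definitionally) an edge of `L^k(G)`. -/
def iterVertexAsEdge {V : Type u} (G : SimpleGraph V) (k : ℕ)
    (x : (iterLineGraph G (k + 1)).1) : (iterLineGraph G k).2.edgeSet := x


namespace StabAux

variable {W : Type u}

/-- degree as `ncard` of the neighbor set -/
noncomputable def nd (H : SimpleGraph W) (v : W) : ℕ := (H.neighborSet v).ncard

/-- The set of edges incident to a vertex. -/
def edgesAt (H : SimpleGraph W) (v : W) : Set H.edgeSet := {e | v ∈ (e : Sym2 W)}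

lemma mem_edgesAt {H : SimpleGraph W} {v : W} {e : H.edgeSet} :
    e ∈ edgesAt H v ↔ v ∈ (e : Sym2 W) := Iff.rfl

noncomputable def edgesAtEquiv (H : SimpleGraph W) (v : W) :
    H.neighborSet v ≃ edgesAt H v where
  toFun u := ⟨⟨s(v, (u : W)), H.mem_edgeSet.2 u.2⟩, Sym2.mem_mk_left _ _⟩
  invFun e := ⟨Sym2.Mem.other e.2, by
    have hsp := Sym2.other_spec e.2
    have := (e : H.edgeSet).2
    rw [← hsp] at this
    exact H.mem_edgeSet.1 this⟩
  left_inv u := by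
    apply Subtype.ext
    have hsp := Sym2.other_spec (α := W)
      (a := v) (z := s(v, (u : W))) (Sym2.mem_mk_left _ _)
    exact Sym2.congr_right.mp hsp
  right_inv e := by
    apply Subtype.ext; apply Subtype.ext
    exact Sym2.other_spec e.2

lemma ncard_edgesAt (H : SimpleGraph W) (v : W) : (edgesAt H v).ncard = nd H v := by
  rw [nd, ← Nat.card_coe_set_eq, ← Nat.card_coe_set_eq]
  exact (Nat.card_congr (edgesAtEquiv H v)).symm

lemma edge_rep {H : SimpleGraph W} (e : H.edgeSet) :
    ∃ u v : W, u ≠ v ∧ (e : Sym2 W) = s(u, v) := by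
  obtain ⟨e, he⟩ := e
  induction e with
  | _ u v => exact ⟨u, v, (H.mem_edgeSet.1 he).ne, rfl⟩

lemma edgesAt_inter {H : SimpleGraph W} {e : H.edgeSet} {u v : W} (huv : u ≠ v)
    (he : (e : Sym2 W) = s(u, v)) : edgesAt H u ∩ edgesAt H v = {e} := by
  ext f
  simp only [Set.mem_inter_iff, mem_edgesAt, Set.mem_singleton_iff]
  constructor
  · rintro ⟨hu, hv⟩
    apply Subtype.ext
    rw [(Sym2.mem_and_mem_iff huv).1 ⟨hu, hv⟩, he]
  · rintro rfl
    constructor <;> rw [he] <;> simp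

lemma neighborSet_lineGraph {H : SimpleGraph W} (e : H.edgeSet) {u v : W}
    (he : (e : Sym2 W) = s(u, v)) :
    H.lineGraph.neighborSet e = (edgesAt H u ∪ edgesAt H v) \ {e} := by
  ext f
  simp only [neighborSet, Set.mem_setOf_eq, lineGraph_adj_iff_exists, Set.mem_diff,
    Set.mem_union, mem_edgesAt, Set.mem_singleton_iff]
  constructor
  · rintro ⟨hne, w, hwe, hwf⟩
    refine ⟨?_, fun h => hne h.symm⟩
    rw [he, Sym2.mem_iff] at hwe
    rcases hwe with rfl | rfl
    · exact Or.inl hwf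
    · exact Or.inr hwf
  · rintro ⟨hw, hne⟩
    refine ⟨fun h => hne h.symm, ?_⟩
    rcases hw with h | h
    · exact ⟨u, by rw [he]; simp, h⟩
    · exact ⟨v, by rw [he]; simp, h⟩

lemma nd_lineGraph [Finite W] {H : SimpleGraph W} (e : H.edgeSet) {u v : W} (huv : u ≠ v)
    (he : (e : Sym2 W) = s(u, v)) :
    nd H.lineGraph e + 2 = nd H u + nd H v := by
  have hmem : e ∈ edgesAt H u ∪ edgesAt H v := by
    left; rw [mem_edgesAt, he]; simp
  have h1 : nd H.lineGraph e + 1 = (edgesAt H u ∪ edgesAt H v).ncard := by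
    rw [nd, neighborSet_lineGraph e he]
    exact Set.ncard_diff_singleton_add_one hmem (Set.toFinite _)
  have h2 := Set.ncard_union_add_ncard_inter (edgesAt H u) (edgesAt H v)
    (Set.toFinite _) (Set.toFinite _)
  rw [edgesAt_inter huv he, Set.ncard_singleton] at h2
  rw [← ncard_edgesAt H u, ← ncard_edgesAt H v]
  omega

end StabAux

namespace StabAux

variable {W : Type u}

section Whitney

variable [Finite W] {H : SimpleGraph W}

/-- `w` is a common vertex of the `σ`-images of all edges at `v`. -/
def StarMap (σ : H.lineGraph ≃g H.lineGraph) (v w : W) : Prop :=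
  ∀ e : H.edgeSet, v ∈ (e : Sym2 W) → w ∈ ((σ e : H.edgeSet) : Sym2 W)

lemma two_edges_at {v : W} (hd : 2 ≤ nd H v) :
    ∃ a b : H.edgeSet, a ∈ edgesAt H v ∧ b ∈ edgesAt H v ∧ a ≠ b := by
  have h := ncard_edgesAt H v
  have h1 : 1 < (edgesAt H v).ncard := by omega
  have := (Set.one_lt_ncard_iff (Set.toFinite _)).1 h1
  exact this

lemma starMap_unique {σ : H.lineGraph ≃g H.lineGraph} {v w w' : W} (hd : 2 ≤ nd H v)
    (hw : StarMap σ v w) (hw' : StarMap σ v w') : w = w' := by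
  obtain ⟨a, b, ha, hb, hab⟩ := two_edges_at hd
  by_contra hne
  have h1 : ((σ a : H.edgeSet) : Sym2 W) = s(w, w') :=
    (Sym2.mem_and_mem_iff hne).1 ⟨hw a ha, hw' a ha⟩
  have h2 : ((σ b : H.edgeSet) : Sym2 W) = s(w, w') :=
    (Sym2.mem_and_mem_iff hne).1 ⟨hw b hb, hw' b hb⟩
  exact hab (σ.injective (Subtype.ext (h1.trans h2.symm)))

lemma common_eq_self {v w : W} (hd : 2 ≤ nd H v)
    (hw : ∀ e : H.edgeSet, v ∈ (e : Sym2 W) → w ∈ (e : Sym2 W)) : w = v := by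
  have hw1 : StarMap (H := H) (RelIso.refl H.lineGraph.Adj) v w := fun e he => hw e he
  have hw2 : StarMap (H := H) (RelIso.refl H.lineGraph.Adj) v v := fun e he => he
  exact starMap_unique hd hw1 hw2

lemma adjacent_images (σ : H.lineGraph ≃g H.lineGraph) {v : W} {a b : H.edgeSet}
    (hab : a ≠ b) (ha : v ∈ (a : Sym2 W)) (hb : v ∈ (b : Sym2 W)) :
    (σ a ≠ σ b) ∧ ∃ w, w ∈ ((σ a : H.edgeSet) : Sym2 W) ∧ w ∈ ((σ b : H.edgeSet) : Sym2 W) := by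
  have h : H.lineGraph.Adj a b := lineGraph_adj_iff_exists.2 ⟨hab, v, ha, hb⟩
  have h2 : H.lineGraph.Adj (σ a) (σ b) := σ.map_rel_iff.2 h
  exact lineGraph_adj_iff_exists.1 h2

lemma star_of_two (h2 : ∀ v, nd H v = 2) (σ : H.lineGraph ≃g H.lineGraph) (v : W) :
    ∃ w, StarMap σ v w := by
  have hc : (edgesAt H v).ncard = 2 := by rw [ncard_edgesAt]; exact h2 v
  obtain ⟨a, b, hab, hset⟩ := Set.ncard_eq_two.1 hc
  have ha : a ∈ edgesAt H v := by rw [hset]; left; rfl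
  have hb : b ∈ edgesAt H v := by rw [hset]; right; rfl
  obtain ⟨-, w, hw1, hw2⟩ := adjacent_images σ hab ha hb
  refine ⟨w, fun e he => ?_⟩
  have : e ∈ ({a, b} : Set H.edgeSet) := hset ▸ he
  rcases this with rfl | rfl
  · exact hw1
  · exact hw2

lemma star_of_four (h4 : ∀ v, 4 ≤ nd H v) (σ : H.lineGraph ≃g H.lineGraph) (v : W) :
    ∃ w, StarMap σ v w := by
  have hd2 : 2 ≤ nd H v := le_trans (by norm_num) (h4 v)
  obtain ⟨a, b, ha, hb, hab⟩ := two_edges_at hd2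
  obtain ⟨hne, x, hxa, hxb⟩ := adjacent_images σ hab ha hb
  refine ⟨x, fun e he => ?_⟩
  by_contra hxe
  have hea : e ≠ a := fun h => hxe (h ▸ hxa)
  have heb : e ≠ b := fun h => hxe (h ▸ hxb)
  obtain ⟨hnea, y, hye, hya⟩ := adjacent_images σ hea he ha
  obtain ⟨hneb, z, hze, hzb⟩ := adjacent_images σ heb he hb
  have hyx : y ≠ x := fun h => hxe (h ▸ hye)
  have hzx : z ≠ x := fun h => hxe (h ▸ hze)
  have hsa : ((σ a : H.edgeSet) : Sym2 W) = s(x, y) :=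
    (Sym2.mem_and_mem_iff (Ne.symm hyx)).1 ⟨hxa, hya⟩
  have hsb : ((σ b : H.edgeSet) : Sym2 W) = s(x, z) :=
    (Sym2.mem_and_mem_iff (Ne.symm hzx)).1 ⟨hxb, hzb⟩
  have hyz : y ≠ z := by
    rintro rfl
    exact hab (σ.injective (Subtype.ext (hsa.trans hsb.symm)))
  have hse : ((σ e : H.edgeSet) : Sym2 W) = s(y, z) :=
    (Sym2.mem_and_mem_iff hyz).1 ⟨hye, hze⟩
  -- get a fourth edge at v
  have hnot : ¬ (edgesAt H v ⊆ {a, b, e}) := by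
    intro hsub
    have hle : (edgesAt H v).ncard ≤ ({a, b, e} : Set H.edgeSet).ncard :=
      Set.ncard_le_ncard hsub (Set.toFinite _)
    have h3 : ({a, b, e} : Set H.edgeSet).ncard ≤ 3 := by
      refine le_trans (Set.ncard_insert_le _ _) ?_
      have := Set.ncard_insert_le b ({e} : Set H.edgeSet)
      simp [Set.ncard_singleton] at this ⊢
      omega
    have := ncard_edgesAt H v
    have := h4 v
    omega
  obtain ⟨g, hg, hgnot⟩ := Set.not_subset.1 hnot
  simp only [Set.mem_insert_iff, Set.mem_singleton_iff, not_or] at hgnot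
  obtain ⟨hga, hgb, hge⟩ := hgnot
  obtain ⟨-, p, hpg, hpa⟩ := adjacent_images σ hga hg ha
  obtain ⟨-, q, hqg, hqb⟩ := adjacent_images σ hgb hg hb
  obtain ⟨-, r, hrg, hre⟩ := adjacent_images σ hge hg he
  rw [hsa, Sym2.mem_iff] at hpa
  rw [hsb, Sym2.mem_iff] at hqb
  rw [hse, Sym2.mem_iff] at hre
  have hgsome : x ∈ ((σ g : H.edgeSet) : Sym2 W) ∨
      (y ∈ ((σ g : H.edgeSet) : Sym2 W) ∧ z ∈ ((σ g : H.edgeSet) : Sym2 W)) := by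
    rcases hpa with rfl | rfl
    · exact Or.inl hpg
    · rcases hqb with rfl | rfl
      · exact Or.inl hqg
      · exact Or.inr ⟨hpg, hqg⟩
  rcases hgsome with hxg | ⟨hyg, hzg⟩
  · rcases hre with rfl | rfl
    · -- r = y : σ g = s(x,y) = σ a
      have : ((σ g : H.edgeSet) : Sym2 W) = s(x, r) :=
        (Sym2.mem_and_mem_iff (Ne.symm hyx)).1 ⟨hxg, hrg⟩
      exact hga (σ.injective (Subtype.ext (this.trans hsa.symm)))
    · have : ((σ g : H.edgeSet) : Sym2 W) = s(x, r) :=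
        (Sym2.mem_and_mem_iff (Ne.symm hzx)).1 ⟨hxg, hrg⟩
      exact hgb (σ.injective (Subtype.ext (this.trans hsb.symm)))
  · have : ((σ g : H.edgeSet) : Sym2 W) = s(y, z) :=
      (Sym2.mem_and_mem_iff hyz).1 ⟨hyg, hzg⟩
    exact hge (σ.injective (Subtype.ext (this.trans hse.symm)))

/-- The canonical map `Aut(H) → Aut(L(H))`. -/
def gammaMap (φ : H ≃g H) : H.lineGraph ≃g H.lineGraph where
  toEquiv := φ.mapEdgeSet
  map_rel_iff' := by
    intro e f
    simp only [lineGraph_adj_iff_exists, Equiv.coe_fn_mk]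
    constructor
    · rintro ⟨hne, w, hw1, hw2⟩
      have hce : (φ.mapEdgeSet e : Sym2 W) = Sym2.map φ (e : Sym2 W) := rfl
      have hcf : (φ.mapEdgeSet f : Sym2 W) = Sym2.map φ (f : Sym2 W) := rfl
      rw [hce, Sym2.mem_map] at hw1
      rw [hcf, Sym2.mem_map] at hw2
      obtain ⟨a, hae, haw⟩ := hw1
      obtain ⟨b, hbf, hbw⟩ := hw2
      have hab : a = b := φ.injective (haw.trans hbw.symm)
      subst hab
      exact ⟨fun h => hne (by rw [h]), a, hae, hbf⟩
    · rintro ⟨hne, w, hw1, hw2⟩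
      refine ⟨fun h => hne (φ.mapEdgeSet.injective h), φ w, ?_, ?_⟩
      · exact Sym2.mem_map.2 ⟨w, hw1, rfl⟩
      · exact Sym2.mem_map.2 ⟨w, hw2, rfl⟩

lemma gammaMap_coe (φ : H ≃g H) (e : H.edgeSet) :
    ((gammaMap φ e : H.edgeSet) : Sym2 W) = Sym2.map φ (e : Sym2 W) := rfl

/-- `gammaMap` as a monoid hom. -/
def gammaHom (H : SimpleGraph W) : (H ≃g H) →* (H.lineGraph ≃g H.lineGraph) where
  toFun := gammaMap
  map_one' := by
    apply RelIso.ext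
    intro e
    apply Subtype.ext
    show Sym2.map _ (e : Sym2 W) = (e : Sym2 W)
    convert congrFun Sym2.map_id (e : Sym2 W) <;> rfl
  map_mul' φ ψ := by
    apply RelIso.ext
    intro e
    apply Subtype.ext
    show Sym2.map (⇑φ ∘ ⇑ψ) (e : Sym2 W) = Sym2.map ⇑φ (Sym2.map ⇑ψ (e : Sym2 W))
    rw [Sym2.map_map]

theorem gammaHom_bijective (hd2 : ∀ v, 2 ≤ nd H v)
    (hstar : ∀ (σ : H.lineGraph ≃g H.lineGraph) (v : W), ∃ w, StarMap σ v w) :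
    Function.Bijective (gammaHom H) := by
  classical
  -- the inverse vertex map
  have hFex : ∀ σ : H.lineGraph ≃g H.lineGraph, ∃ F : W → W, ∀ v, StarMap σ v (F v) :=
    fun σ => ⟨fun v => Classical.choose (hstar σ v), fun v => Classical.choose_spec (hstar σ v)⟩
  choose F hF using hFex
  have hinv : ∀ (σ : H.lineGraph ≃g H.lineGraph) (v : W), F σ.symm (F σ v) = v := by
    intro σ v
    apply common_eq_self (hd2 v)
    intro e he
    have h2 := hF σ.symm (F σ v) (σ e) (hF σ v e he)
    rwa [σ.symm_apply_apply] at h2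
  have hsymmsymm : ∀ σ : H.lineGraph ≃g H.lineGraph, σ.symm.symm = σ := fun σ => rfl
  have hinv' : ∀ (σ : H.lineGraph ≃g H.lineGraph) (v : W), F σ (F σ.symm v) = v := by
    intro σ v
    have := hinv σ.symm v
    rwa [hsymmsymm σ] at this
  have hedge : ∀ (σ : H.lineGraph ≃g H.lineGraph) (u v : W) (h : H.Adj u v),
      ((σ ⟨s(u, v), h⟩ : H.edgeSet) : Sym2 W) = s(F σ u, F σ v) := by
    intro σ u v h
    have hu : F σ u ∈ ((σ ⟨s(u, v), h⟩ : H.edgeSet) : Sym2 W) := hF σ u _ (by simp)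
    have hv : F σ v ∈ ((σ ⟨s(u, v), h⟩ : H.edgeSet) : Sym2 W) := hF σ v _ (by simp)
    have hne : F σ u ≠ F σ v := by
      intro hEq
      have : u = v := by
        have h1 := hinv σ u
        have h2 := hinv σ v
        rw [← h1, ← h2, hEq]
      exact h.ne this
    exact (Sym2.mem_and_mem_iff hne).1 ⟨hu, hv⟩
  have hadjF : ∀ (σ : H.lineGraph ≃g H.lineGraph) (u v : W), H.Adj u v → H.Adj (F σ u) (F σ v) := by
    intro σ u v h
    have hp := (σ ⟨s(u, v), h⟩ : H.edgeSet).2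
    rw [hedge σ u v h] at hp
    exact H.mem_edgeSet.1 hp
  -- the inverse automorphism
  have hsurj : Function.Surjective (gammaHom H) := by
    intro σ
    refine ⟨⟨⟨F σ, F σ.symm, hinv σ, hinv' σ⟩, ?_⟩, ?_⟩
    · intro u v
      constructor
      · intro h
        have := hadjF σ.symm _ _ h
        simp only [Equiv.coe_fn_mk] at this
        rwa [hinv σ u, hinv σ v] at this
      · exact hadjF σ u v
    · apply RelIso.ext
      intro e
      apply Subtype.ext
      obtain ⟨u, v, huv, hrep⟩ := edge_rep e
      have hadj : H.Adj u v := by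
        have := e.2; rw [hrep] at this; exact H.mem_edgeSet.1 this
      have he' : e = ⟨s(u, v), hadj⟩ := Subtype.ext hrep
      rw [he']
      show Sym2.map _ (s(u, v)) = _
      rw [Sym2.map_pair_eq, hedge σ u v hadj]
      rfl
  have hinj : Function.Injective (gammaHom H) := by
    intro φ ψ h
    apply RelIso.ext
    intro v
    have hv2 : 1 < (H.neighborSet v).ncard := hd2 v
    obtain ⟨u₁, u₂, hu₁, hu₂, hne⟩ :=
      (Set.one_lt_ncard_iff (Set.finite_of_ncard_pos (by omega))).1 hv2
    have key : ∀ u : W, (hu : H.Adj v u) →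
        s(φ v, φ u) = s(ψ v, ψ u) := by
      intro u hu
      have h1 : gammaMap φ ⟨s(v, u), hu⟩ = gammaMap ψ ⟨s(v, u), hu⟩ := by
        rw [show gammaMap φ = gammaHom H φ from rfl, show gammaMap ψ = gammaHom H ψ from rfl, h]
      have h2 := congrArg Subtype.val h1
      rw [gammaMap_coe, gammaMap_coe] at h2
      simpa [Sym2.map_pair_eq] using h2
    have k1 := Sym2.eq_iff.1 (key u₁ hu₁)
    have k2 := Sym2.eq_iff.1 (key u₂ hu₂)
    rcases k1 with ⟨h1, -⟩ | ⟨h1, h1'⟩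
    · exact h1
    · rcases k2 with ⟨h2, -⟩ | ⟨h2, h2'⟩
      · exact h2
      · exact absurd (ψ.injective (h1.symm.trans h2)) hne
  exact ⟨hinj, hsurj⟩

/-- Whitney: under the degree condition the canonical map is a group isomorphism. -/
theorem exists_gamma_mulEquiv (hfine : (∀ v, nd H v = 2) ∨ (∀ v, 4 ≤ nd H v)) :
    ∃ Γ : (H ≃g H) ≃* (H.lineGraph ≃g H.lineGraph),
      ∀ (φ : H ≃g H) (e : H.edgeSet),
        ((Γ φ e : H.edgeSet) : Sym2 W) = Sym2.map φ (e : Sym2 W) := by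
  have hd2 : ∀ v, 2 ≤ nd H v := by
    rcases hfine with h | h
    · exact fun v => le_of_eq (h v).symm
    · exact fun v => le_trans (by norm_num) (h v)
  have hstar : ∀ (σ : H.lineGraph ≃g H.lineGraph) (v : W), ∃ w, StarMap σ v w := by
    rcases hfine with h | h
    · exact star_of_two h
    · exact star_of_four h
  refine ⟨MulEquiv.ofBijective (gammaHom H) (gammaHom_bijective hd2 hstar), fun φ e => ?_⟩
  rfl

end Whitney

-- weights
def cw (d : ℕ) : ℕ := 3 - d
def gw (d : ℕ) : ℕ := if d ≤ 1 then 4 else if d = 2 then 1 else 0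

lemma key_ineq {a b dL : ℕ} (ha : 1 ≤ a) (hb : 1 ≤ b) (h : dL + 2 = a + b) :
    2 * cw dL ≤ gw a + gw b := by
  unfold cw gw; split_ifs <;> omega

lemma key_strict {a b dL : ℕ} (ha : 1 ≤ a) (hb : 1 ≤ b) (h : dL + 2 = a + b)
    (hs : a = 1 ∨ b = 1 ∨ (a = 2 ∧ 3 ≤ b) ∨ (b = 2 ∧ 3 ≤ a)) :
    2 * cw dL + 1 ≤ gw a + gw b := by
  unfold cw gw; split_ifs <;> omega

lemma vert_ineq (d : ℕ) : d * gw d ≤ 2 * cw d := by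
  unfold cw gw; split_ifs <;> omega

/-- The potential function. -/
noncomputable def Phi (H : SimpleGraph W) : ℕ := ∑ᶠ v, cw (nd H v)

section Descent

variable [Finite W] {H : SimpleGraph W}

lemma adj_of_edge {e : H.edgeSet} {u v : W} (hrep : (e : Sym2 W) = s(u, v)) : H.Adj u v := by
  have := e.2; rw [hrep] at this; exact H.mem_edgeSet.1 this

lemma nd_pos (hconn : H.Connected) (hne : Nonempty H.edgeSet) (x : W) : 1 ≤ nd H x := by
  obtain ⟨e⟩ := hne
  obtain ⟨u, v, huv, hrep⟩ := edge_rep e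
  have hadj : H.Adj u v := adj_of_edge hrep
  have hex : ∃ y, H.Adj x y := by
    obtain ⟨p⟩ := hconn.preconnected x u
    cases p with
    | nil => exact ⟨v, hadj⟩
    | cons h q => exact ⟨_, h⟩
  obtain ⟨y, hy⟩ := hex
  have h1 : 0 < (H.neighborSet x).ncard := (Set.ncard_pos (Set.toFinite _)).2 ⟨y, hy⟩
  unfold nd
  omega

lemma phi_pos_of (v : W) (hv : nd H v ≤ 2) : 0 < Phi H := by
  classical
  letI : Fintype W := Fintype.ofFinite W
  rw [Phi, finsum_eq_sum_of_fintype]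
  have h1 : 1 ≤ cw (nd H v) := by unfold cw; omega
  calc 0 < cw (nd H v) := h1
    _ ≤ ∑ w, cw (nd H w) := Finset.single_le_sum (f := fun w => cw (nd H w)) (fun i _ => Nat.zero_le _) (Finset.mem_univ v)

theorem phi_descent (hconn : H.Connected) (hnreg : ¬ ∀ v, nd H v = 2)
    (hpos : 0 < Phi H) : Phi H.lineGraph < Phi H := by
  classical
  letI : Fintype W := Fintype.ofFinite W
  letI : DecidableEq W := Classical.decEq W
  letI : DecidableRel H.Adj := Classical.decRel _
  by_cases hE : IsEmpty H.edgeSet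
  · have h0 : Phi H.lineGraph = 0 := by
      rw [Phi]; exact finsum_of_isEmpty _
    omega
  have hne : Nonempty H.edgeSet := not_isEmpty_iff.1 hE
  letI : Fintype H.edgeSet := Fintype.ofFinite _
  set q : Sym2 W → ℕ := Sym2.lift ⟨fun a b => gw (nd H a) + gw (nd H b), fun a b => Nat.add_comm _ _⟩
    with hq
  have hpoint : ∀ e : H.edgeSet, 2 * cw (nd H.lineGraph e) ≤ q (e : Sym2 W) := by
    intro e
    obtain ⟨u, v, huv, hrep⟩ := edge_rep e
    have hform := nd_lineGraph e huv hrep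
    rw [hrep, hq, Sym2.lift_mk]
    exact key_ineq (nd_pos hconn hne u) (nd_pos hconn hne v) hform
  have hstrict : ∃ e₀ : H.edgeSet, 2 * cw (nd H.lineGraph e₀) + 1 ≤ q (e₀ : Sym2 W) := by
    have hlow : ∃ v, 1 ≤ nd H v ∧ nd H v ≤ 2 := by
      rw [Phi, finsum_eq_sum_of_fintype] at hpos
      obtain ⟨v, -, hv⟩ := Finset.exists_ne_zero_of_sum_ne_zero hpos.ne'
      refine ⟨v, nd_pos hconn hne v, ?_⟩
      unfold cw at hv; omega
    by_cases h1 : ∃ x, nd H x = 1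
    · obtain ⟨x, hx⟩ := h1
      have hex : ∃ y, y ∈ H.neighborSet x := by
        refine Set.nonempty_def.1 ((Set.ncard_pos (Set.toFinite _)).1 ?_)
        unfold nd at hx; omega
      obtain ⟨y, hy⟩ := hex
      have hadj : H.Adj x y := hy
      refine ⟨⟨s(x, y), hadj⟩, ?_⟩
      have hform := nd_lineGraph (H := H) ⟨s(x, y), hadj⟩ hadj.ne rfl
      rw [hq, Sym2.lift_mk]
      exact key_strict (nd_pos hconn hne x) (nd_pos hconn hne y) hform (Or.inl hx)
    · push_neg at h1
      obtain ⟨v, hv1, hv2⟩ := hlow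
      have hv2' : nd H v = 2 := by have := h1 v; omega
      obtain ⟨w, hw⟩ := not_forall.1 hnreg
      have hw3 : 3 ≤ nd H w := by
        have := h1 w
        have := nd_pos hconn hne w
        omega
      obtain ⟨p⟩ := hconn.preconnected v w
      obtain ⟨d, -, hd1, hd2⟩ := p.exists_boundary_dart {x | nd H x = 2} hv2'
        (by simp only [Set.mem_setOf_eq]; omega)
      simp only [Set.mem_setOf_eq] at hd1 hd2
      refine ⟨⟨d.edge, d.edge_mem⟩, ?_⟩
      have hrep : ((⟨d.edge, d.edge_mem⟩ : H.edgeSet) : Sym2 W) = s(d.fst, d.snd) := rfl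
      have hform := nd_lineGraph (H := H) ⟨d.edge, d.edge_mem⟩ d.adj.ne hrep
      rw [hrep, hq, Sym2.lift_mk]
      have hsnd : 3 ≤ nd H d.snd := by
        have := h1 d.snd
        have := nd_pos hconn hne d.snd
        omega
      exact key_strict (nd_pos hconn hne d.fst) (nd_pos hconn hne d.snd) hform
        (Or.inr (Or.inr (Or.inl ⟨hd1, hsnd⟩)))
  -- handshake
  have hhand : ∑ e : H.edgeSet, q (e : Sym2 W) = ∑ v, nd H v * gw (nd H v) := by
    have h1 : ∑ d : H.Dart, gw (nd H d.fst) = ∑ e : H.edgeSet, q (e : Sym2 W) := by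
      rw [← Finset.sum_fiberwise_of_maps_to
        (g := fun d : H.Dart => (⟨d.edge, d.edge_mem⟩ : H.edgeSet))
        (fun d _ => Finset.mem_univ _) (fun d => gw (nd H d.fst))]
      apply Finset.sum_congr rfl
      intro e _
      obtain ⟨u, v, huv, hrep⟩ := edge_rep e
      have hadj : H.Adj u v := adj_of_edge hrep
      set d₀ : H.Dart := ⟨(u, v), hadj⟩ with hd₀
      have hedge₀ : d₀.edge = (e : Sym2 W) := by rw [hrep]; rfl
      have hfil : Finset.univ.filter
          (fun d : H.Dart => (⟨d.edge, d.edge_mem⟩ : H.edgeSet) = e) = {d₀, d₀.symm} := by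
        rw [← d₀.edge_fiber]
        apply Finset.filter_congr
        intro d _
        simp only [Subtype.ext_iff, hedge₀]
      rw [hfil, Finset.sum_insert (by
        simp only [Finset.mem_singleton]
        exact fun h => d₀.symm_ne h.symm), Finset.sum_singleton]
      have hsymm : d₀.symm.fst = v := rfl
      rw [hrep, hq, Sym2.lift_mk, hsymm]
    have h2 : ∑ d : H.Dart, gw (nd H d.fst) = ∑ v, nd H v * gw (nd H v) := by
      rw [← Finset.sum_fiberwise_of_maps_to (g := fun d : H.Dart => d.fst)
        (fun d _ => Finset.mem_univ _) (fun d => gw (nd H d.fst))]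
      apply Finset.sum_congr rfl
      intro v _
      have hcongr : ∀ d ∈ Finset.univ.filter (fun d : H.Dart => d.fst = v),
          gw (nd H d.fst) = gw (nd H v) := by
        intro d hd
        rw [Finset.mem_filter] at hd
        rw [hd.2]
      rw [Finset.sum_congr rfl hcongr, Finset.sum_const, smul_eq_mul]
      congr 1
      have hnd : nd H v = H.degree v := by
        rw [nd, degree, neighborFinset_def, Set.ncard_eq_toFinset_card']
      rw [hnd]
      exact H.dart_fst_fiber_card_eq_degree v
    rw [← h1, h2]
  have hA : 2 * Phi H.lineGraph < ∑ e : H.edgeSet, q (e : Sym2 W) := by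
    rw [Phi, finsum_eq_sum_of_fintype, Finset.mul_sum]
    obtain ⟨e₀, he₀⟩ := hstrict
    exact Finset.sum_lt_sum (fun e _ => hpoint e) ⟨e₀, Finset.mem_univ _, by omega⟩
  have hB : ∑ v, nd H v * gw (nd H v) ≤ 2 * Phi H := by
    rw [Phi, finsum_eq_sum_of_fintype, Finset.mul_sum]
    exact Finset.sum_le_sum (fun v _ => vert_ineq (nd H v))
  omega

end Descent

/-- The terminal degree condition. -/
def Fine2 (H : SimpleGraph W) : Prop := (∀ v, nd H v = 2) ∨ (∀ v, 4 ≤ nd H v)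

section Conn

variable [Finite W] {H : SimpleGraph W}

lemma lineGraph_connected (hconn : H.Connected) (hne : Nonempty H.edgeSet) :
    H.lineGraph.Connected := by
  rw [connected_iff]
  refine ⟨?_, hne⟩
  have key : ∀ (u v : W) (p : H.Walk u v) (e f : H.edgeSet),
      u ∈ (e : Sym2 W) → v ∈ (f : Sym2 W) → H.lineGraph.Reachable e f := by
    intro u v p
    induction p with
    | nil =>
      intro e f he hf
      by_cases hef : e = f
      · subst hef; rfl
      · exact (lineGraph_adj_iff_exists.2 ⟨hef, _, he, hf⟩).reachable
    | @cons a x v h p ih =>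
      intro e f he hf
      have hg : s(a, x) ∈ H.edgeSet := H.mem_edgeSet.2 h
      have step2 : H.lineGraph.Reachable ⟨s(a, x), hg⟩ f :=
        ih ⟨s(a, x), hg⟩ f (Sym2.mem_mk_right a x) hf
      by_cases heg : e = ⟨s(a, x), hg⟩
      · rw [heg]; exact step2
      · exact ((lineGraph_adj_iff_exists.2
          ⟨heg, a, he, Sym2.mem_mk_left a x⟩).reachable).trans step2
  intro e f
  obtain ⟨u, v, huv, hrep⟩ := edge_rep e
  obtain ⟨a, b, hab, hrep'⟩ := edge_rep f
  obtain ⟨p⟩ := hconn.preconnected u a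
  exact key u a p e f (by rw [hrep]; exact Sym2.mem_mk_left u v)
    (by rw [hrep']; exact Sym2.mem_mk_left a b)

lemma fine2_lineGraph {H : SimpleGraph W} (h : Fine2 H) : Fine2 H.lineGraph := by
  rcases h with h | h
  · left
    intro e
    obtain ⟨u, v, huv, hrep⟩ := edge_rep e
    have := nd_lineGraph e huv hrep
    have h1 := h u; have h2 := h v
    omega
  · right
    intro e
    obtain ⟨u, v, huv, hrep⟩ := edge_rep e
    have := nd_lineGraph e huv hrep
    have h1 := h u; have h2 := h v
    omega

lemma three_step (h : ∀ v, 3 ≤ nd H v) : ∀ e, 4 ≤ nd H.lineGraph e := by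
  intro e
  obtain ⟨u, v, huv, hrep⟩ := edge_rep e
  have := nd_lineGraph e huv hrep
  have h1 := h u; have h2 := h v
  omega

end Conn

/-- `Fine2` as a predicate on bundled graphs. -/
def Fine2S (p : Σ W : Type u, SimpleGraph W) : Prop := Fine2 p.2

lemma iter_finite {V : Type u} [Finite V] (G : SimpleGraph V) :
    ∀ k, Finite (iterLineGraph G k).1
  | 0 => ‹Finite V›
  | k + 1 => by
    letI := iter_finite G k
    show Finite (iterLineGraph G k).2.edgeSet
    infer_instance

lemma iter_succ {V : Type u} (G : SimpleGraph V) (k : ℕ) :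
    iterLineGraph G (k + 1) = iterLineGraph G.lineGraph k := by
  induction k with
  | zero => rfl
  | succ k ih =>
    exact congrArg
      (fun p : Σ W : Type u, SimpleGraph W =>
        (⟨p.2.edgeSet, p.2.lineGraph⟩ : Σ W : Type u, SimpleGraph W)) ih

theorem reach_fine : ∀ (n : ℕ) {W : Type u} [Finite W] (H : SimpleGraph W),
    H.Connected → Phi H ≤ n → ∃ K, Fine2S (iterLineGraph H K) := by
  intro n
  induction n using Nat.strong_induction_on with
  | _ n ih =>
    intro W _ H hconn hphi
    by_cases h2 : ∀ v, nd H v = 2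
    · exact ⟨0, Or.inl h2⟩
    by_cases h3 : ∀ v, 3 ≤ nd H v
    · exact ⟨1, Or.inr (three_step (H := H) h3)⟩
    by_cases hE : IsEmpty H.edgeSet
    · refine ⟨1, Or.inl fun e => hE.elim' e⟩
    · have hne := not_isEmpty_iff.1 hE
      have hLconn := lineGraph_connected hconn hne
      push_neg at h3
      obtain ⟨v, hv⟩ := h3
      have hpos : 0 < Phi H := phi_pos_of v (by omega)
      have hdesc := phi_descent hconn h2 hpos
      obtain ⟨K, hK⟩ := ih (Phi H.lineGraph) (by omega) H.lineGraph hLconn le_rfl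
      refine ⟨K + 1, ?_⟩
      rw [iter_succ]
      exact hK

lemma fine_forever {V : Type u} [Finite V] (G : SimpleGraph V) (K : ℕ)
    (h : Fine2S (iterLineGraph G K)) : ∀ k, K ≤ k → Fine2S (iterLineGraph G k) := by
  intro k hk
  induction k, hk using Nat.le_induction with
  | base => exact h
  | succ k hk ih =>
    letI := iter_finite G k
    exact fine2_lineGraph ih

end StabAux


open StabAux in
/-- If `G` is a finite connected simple graph that is not a path, then there is a `K` such that
for all `k ≥ K` the natural map `γ_{L^k(G)} : Aut(L^k(G)) → Aut(L^{k+1}(G))`, sending `φ` to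
the automorphism `{u,v} ↦ {φ u, φ v}` of the line graph, is a group isomorphism; in particular
all the automorphism groups `Aut(L^k(G))` for `k ≥ K` are isomorphic. -/
theorem aut_iterLineGraph_stabilizes {V : Type u} [Fintype V] (G : SimpleGraph V)
    (hconn : G.Connected)
    (hpath : ¬ ∃ n : ℕ, Nonempty (G ≃g pathGraph n)) :
    ∃ K : ℕ, (∀ k ≥ K,
      ∃ Γ : ((iterLineGraph G k).2 ≃g (iterLineGraph G k).2) ≃*
            ((iterLineGraph G (k + 1)).2 ≃g (iterLineGraph G (k + 1)).2),
        ∀ (φ : (iterLineGraph G k).2 ≃g (iterLineGraph G k).2)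
          (x : (iterLineGraph G (k + 1)).1),
          (iterVertexAsEdge G k ((Γ φ) x) : Sym2 (iterLineGraph G k).1) =
            Sym2.map φ (iterVertexAsEdge G k x : Sym2 (iterLineGraph G k).1)) ∧
      ∀ k ≥ K, Nonempty
        (((iterLineGraph G K).2 ≃g (iterLineGraph G K).2) ≃*
         ((iterLineGraph G k).2 ≃g (iterLineGraph G k).2)) := by
  classical
  obtain ⟨K, hK⟩ := reach_fine (Phi G) G hconn le_rfl
  have hfine : ∀ k, K ≤ k → Fine2S (iterLineGraph G k) := fine_forever G K hK
  have part1 : ∀ k ≥ K,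
      ∃ Γ : ((iterLineGraph G k).2 ≃g (iterLineGraph G k).2) ≃*
            ((iterLineGraph G (k + 1)).2 ≃g (iterLineGraph G (k + 1)).2),
        ∀ (φ : (iterLineGraph G k).2 ≃g (iterLineGraph G k).2)
          (x : (iterLineGraph G (k + 1)).1),
          (iterVertexAsEdge G k ((Γ φ) x) : Sym2 (iterLineGraph G k).1) =
            Sym2.map φ (iterVertexAsEdge G k x : Sym2 (iterLineGraph G k).1) := by
    intro k hk
    letI := iter_finite G k
    obtain ⟨Γ, hΓ⟩ := exists_gamma_mulEquiv (H := (iterLineGraph G k).2) (hfine k hk)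
    exact ⟨Γ, fun φ x => hΓ φ x⟩
  refine ⟨K, part1, ?_⟩
  intro k hk
  induction k, hk using Nat.le_induction with
  | base => exact ⟨MulEquiv.refl _⟩
  | succ k hk ih =>
    obtain ⟨Γ, -⟩ := part1 k hk
    obtain ⟨Ψ⟩ := ih
    exact ⟨Ψ.trans Γ⟩
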